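/- arXiv:1207.2681 — 2 statements merged into one kernel-verified Lean document; each statement's English description precedes it below -/
import Mathlib

section
/- (One iteration of Oblique Hard Thresholding Pursuit.) Let Ψ, Ψ̃ ∈ K^{m×n}, let x* ∈ K^n be s-sparse, let z ∈ K^m and y = Ψx* + z, let x ∈ K^n be s-sparse, and assume θ := θ_{3s}(Ψ̃*Ψ) < 1. Let v = x + Ψ̃*(y − Ψx), let J₁ ⊆ {1,…,n} with |J₁| = s satisfy min_{j∈J₁}|v_j| ≥ max_{j∉J₁}|v_j|, and let x⁺ be the (unique) vector supported on J₁ with Ψ̃_{J₁}*(y − Ψx⁺) = 0 (well defined since Ψ̃_{J₁}*Ψ_{J₁} is invertible). Then ‖x⁺ − x*‖₂ ≤ √(2θ²/(1−θ²))·‖x − x*‖₂ + ( √(2/(1−θ²)) + 1/(1−θ) )·√(1 + δ_{2s}(Ψ̃))·‖z‖₂. -/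
open scoped BigOperators
open Matrix MeasureTheory

noncomputable section

namespace ObliquePursuit

variable {𝕜 : Type*} [RCLike 𝕜]

/-- The Euclidean (`ℓ²`) norm of a finitely indexed vector. -/
def l2 {ι : Type*} [Fintype ι] (x : ι → 𝕜) : ℝ :=
  Real.sqrt (∑ i, ‖x i‖ ^ 2)

/-- The spectral (`ℓ² → ℓ²` operator) norm of a matrix. -/
def specNorm {ι κ : Type*} [Fintype ι] [Fintype κ] [DecidableEq κ]
    (M : Matrix ι κ 𝕜) : ℝ :=
  ‖LinearMap.toContinuousLinearMap (Matrix.toEuclideanLin M)‖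

/-- `x` is `s`-sparse: it has at most `s` nonzero entries. -/
def Sparse {ι : Type*} (s : ℕ) (x : ι → 𝕜) : Prop :=
  ∃ J : Finset ι, J.card ≤ s ∧ ∀ i, x i ≠ 0 → i ∈ J

/-- The `s`-restricted biorthogonality constant `θ_s(M)`: the smallest `δ ≥ 0` such that
`|⟨y, Mx⟩ − ⟨y, x⟩| ≤ δ‖x‖₂‖y‖₂` for all `x, y` supported on a common index set of
cardinality at most `s`. -/
def theta {ι : Type*} [Fintype ι] (s : ℕ) (M : Matrix ι ι 𝕜) : ℝ :=
  sInf {δ : ℝ | 0 ≤ δ ∧ ∀ J : Finset ι, J.card ≤ s →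
    ∀ x y : ι → 𝕜, (∀ i, x i ≠ 0 → i ∈ J) → (∀ i, y i ≠ 0 → i ∈ J) →
      ‖star y ⬝ᵥ M.mulVec x - star y ⬝ᵥ x‖ ≤ δ * l2 x * l2 y}

/-- The `s`-restricted isometry constant `δ_s(Ψ)`. -/
def ric {ι κ : Type*} [Fintype ι] [Fintype κ] (s : ℕ) (Ψ : Matrix ι κ 𝕜) : ℝ :=
  sInf {δ : ℝ | 0 ≤ δ ∧ ∀ x : κ → 𝕜, Sparse s x →
    (1 - δ) * l2 x ^ 2 ≤ l2 (Ψ.mulVec x) ^ 2 ∧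
      l2 (Ψ.mulVec x) ^ 2 ≤ (1 + δ) * l2 x ^ 2}

/-- Coordinate projection `Π_J`: keep the entries indexed by `J`, zero out the others. -/
def proj {ι : Type*} [DecidableEq ι] (J : Finset ι) (x : ι → 𝕜) : ι → 𝕜 :=
  fun i => if i ∈ J then x i else 0

/-- The column submatrix `Ψ_J` of `Ψ` formed by the columns indexed by `J`. -/
def cols {ι κ : Type*} (Ψ : Matrix ι κ 𝕜) (J : Finset κ) :
    Matrix ι {j // j ∈ J} 𝕜 :=
  Ψ.submatrix id fun j => (j : κ)

/-- The `j`-th column of `Ψ`. -/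
def col {ι κ : Type*} (Ψ : Matrix ι κ 𝕜) (j : κ) : ι → 𝕜 :=
  fun i => Ψ i j

/-- The complementary oblique projector `E = I − Ψ_J (Ψ̃_J^* Ψ_J)⁻¹ Ψ̃_J^*`
(equal to `I` when `J = ∅`). -/
def obliqueE {ι κ : Type*} [Fintype ι] [DecidableEq ι] [DecidableEq κ]
    (Ψ Ψt : Matrix ι κ 𝕜) (J : Finset κ) : Matrix ι ι 𝕜 :=
  1 - cols Ψ J * ((cols Ψt J)ᴴ * cols Ψ J)⁻¹ * (cols Ψt J)ᴴ

/-- The smallest (real) eigenvalue of a matrix. -/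
def lamMin {ι : Type*} [Fintype ι] (G : Matrix ι ι 𝕜) : ℝ :=
  sInf {r : ℝ | ∃ v : ι → 𝕜, v ≠ 0 ∧ G.mulVec v = (r : 𝕜) • v}

/-- The `j`-th largest singular value (1-indexed) of a matrix, characterized via the
Eckart–Young–Mirsky theorem: `σ_j(A) = min { ‖A − B‖ : rank B < j }` where `‖·‖` is the
spectral norm. -/
def singVal {ι κ : Type*} [Fintype ι] [Fintype κ] [DecidableEq κ]
    (A : Matrix ι κ 𝕜) (j : ℕ) : ℝ :=
  sInf {r : ℝ | ∃ B : Matrix ι κ 𝕜, B.rank < j ∧ r = specNorm (A - B)}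


section Helpers
variable {ι κ : Type*} [Fintype ι] [Fintype κ]

omit [Fintype ι] in
lemma proj_support' [DecidableEq ι] (J : Finset ι) (x : ι → 𝕜) :
    ∀ i, proj J x i ≠ 0 → i ∈ J := by
  intro i hi; by_contra h; simp [proj, h] at hi

lemma l2_nonneg (x : ι → 𝕜) : 0 ≤ l2 x := Real.sqrt_nonneg _

lemma l2_sq (x : ι → 𝕜) : l2 x ^ 2 = ∑ i, ‖x i‖ ^ 2 := Real.sq_sqrt (by positivity)

lemma l2_eq_norm (x : ι → 𝕜) : l2 x = ‖(WithLp.equiv 2 (ι → 𝕜)).symm x‖ := by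
  rw [EuclideanSpace.norm_eq]; rfl

lemma l2_add_le (x y : ι → 𝕜) : l2 (x + y) ≤ l2 x + l2 y := by
  rw [l2_eq_norm, l2_eq_norm, l2_eq_norm]
  exact norm_add_le ((WithLp.equiv 2 (ι → 𝕜)).symm x) ((WithLp.equiv 2 (ι → 𝕜)).symm y)

lemma l2_neg (x : ι → 𝕜) : l2 (-x) = l2 x := by
  unfold l2; congr 1; simp

lemma l2_sub_le (x y : ι → 𝕜) : l2 (x - y) ≤ l2 x + l2 y := by
  rw [sub_eq_add_neg]
  exact (l2_add_le x (-y)).trans (by rw [l2_neg])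

lemma norm_dot_le (x y : ι → 𝕜) : ‖star x ⬝ᵥ y‖ ≤ l2 x * l2 y := by
  have h := norm_inner_le_norm (𝕜 := 𝕜) ((WithLp.equiv 2 (ι → 𝕜)).symm x)
    ((WithLp.equiv 2 (ι → 𝕜)).symm y)
  rw [← l2_eq_norm, ← l2_eq_norm] at h
  convert h using 2
  simp [dotProduct, PiLp.inner_apply, RCLike.inner_apply, mul_comm]

lemma adjoint_dot (A : Matrix ι κ 𝕜) (v : κ → 𝕜) (u : ι → 𝕜) :
    star (A.mulVec v) ⬝ᵥ u = star v ⬝ᵥ (Aᴴ.mulVec u) := by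
  rw [star_mulVec, dotProduct_mulVec]

omit [Fintype ι] in
lemma proj_add' [DecidableEq ι] (J : Finset ι) (x y : ι → 𝕜) :
    proj J (x + y) = proj J x + proj J y := by
  funext i; simp only [proj, Pi.add_apply]; split <;> simp

omit [Fintype ι] in
lemma proj_neg' [DecidableEq ι] (J : Finset ι) (x : ι → 𝕜) : proj J (-x) = -proj J x := by
  funext i; simp only [proj, Pi.neg_apply]; split <;> simp

omit [Fintype ι] in
lemma proj_sub' [DecidableEq ι] (J : Finset ι) (x y : ι → 𝕜) :
    proj J (x - y) = proj J x - proj J y := by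
  rw [sub_eq_add_neg, proj_add', proj_neg', sub_eq_add_neg]

lemma l2_proj_sq [DecidableEq ι] (J : Finset ι) (x : ι → 𝕜) :
    l2 (proj J x) ^ 2 = ∑ i ∈ J, ‖x i‖ ^ 2 := by
  rw [l2_sq]
  have h : ∀ i, ‖proj J x i‖ ^ 2 = if i ∈ J then ‖x i‖ ^ 2 else 0 := by
    intro i; simp only [proj]; split <;> simp
  simp only [h]
  rw [Finset.sum_ite_mem, Finset.univ_inter]

lemma l2_split [DecidableEq ι] (J : Finset ι) (x : ι → 𝕜) :
    l2 x ^ 2 = l2 (proj J x) ^ 2 + l2 (proj Jᶜ x) ^ 2 := by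
  rw [l2_sq, l2_proj_sq, l2_proj_sq, Finset.sum_add_sum_compl]

lemma l2_eq_of_sq_eq {u w : ι → 𝕜} (h : l2 u ^ 2 = l2 w ^ 2) : l2 u = l2 w := by
  nlinarith [l2_nonneg u, l2_nonneg w]

lemma l2_le_of_sq_le {u w : ι → 𝕜} (h : l2 u ^ 2 ≤ l2 w ^ 2) : l2 u ≤ l2 w := by
  nlinarith [l2_nonneg u, l2_nonneg w]

lemma dot_proj_self [DecidableEq ι] (J : Finset ι) (u : ι → 𝕜) :
    star (proj J u) ⬝ᵥ u = ((l2 (proj J u) ^ 2 : ℝ) : 𝕜) := by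
  rw [l2_proj_sq]
  have h : ∀ i, star (proj J u) i * u i = if i ∈ J then ((‖u i‖ ^ 2 : ℝ) : 𝕜) else 0 := by
    intro i
    simp only [Pi.star_apply, proj]
    split
    · rw [RCLike.star_def, RCLike.conj_mul]; push_cast; ring
    · simp
  rw [dotProduct]
  simp only [h]
  rw [Finset.sum_ite_mem, Finset.univ_inter]
  push_cast
  rfl

lemma norm_le_l2 (x : ι → 𝕜) (j : ι) : ‖x j‖ ≤ l2 x := by
  have h1 : ‖x j‖ ^ 2 ≤ l2 x ^ 2 := by
    rw [l2_sq]
    exact Finset.single_le_sum (f := fun i => ‖x i‖ ^ 2) (fun i _ => by positivity)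
      (Finset.mem_univ j)
  nlinarith [l2_nonneg x, norm_nonneg (x j)]

lemma theta_set_mem [DecidableEq ι] (s : ℕ) (M : Matrix ι ι 𝕜) :
    (∑ i, ∑ j, ‖(M - 1) i j‖) ∈ {δ : ℝ | 0 ≤ δ ∧ ∀ J : Finset ι, J.card ≤ s →
    ∀ x y : ι → 𝕜, (∀ i, x i ≠ 0 → i ∈ J) → (∀ i, y i ≠ 0 → i ∈ J) →
      ‖star y ⬝ᵥ M.mulVec x - star y ⬝ᵥ x‖ ≤ δ * l2 x * l2 y} := by
  refine ⟨by positivity, fun J hJ x y hx hy => ?_⟩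
  have key : star y ⬝ᵥ M.mulVec x - star y ⬝ᵥ x = star y ⬝ᵥ (M - 1).mulVec x := by
    rw [sub_mulVec, dotProduct_sub, one_mulVec]
  rw [key]
  have h1 : ‖star y ⬝ᵥ (M - 1).mulVec x‖ ≤ ∑ i, ∑ j, ‖(M - 1) i j‖ * (l2 x * l2 y) := by
    calc ‖star y ⬝ᵥ (M - 1).mulVec x‖ ≤ ∑ i, ‖star y i * (M - 1).mulVec x i‖ :=
          norm_sum_le _ _
      _ ≤ ∑ i, ∑ j, ‖(M - 1) i j‖ * (l2 x * l2 y) := by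
          refine Finset.sum_le_sum fun i _ => ?_
          rw [norm_mul]
          calc ‖star y i‖ * ‖(M - 1).mulVec x i‖
              ≤ ‖y i‖ * ∑ j, ‖(M - 1) i j * x j‖ := by
                rw [Pi.star_apply, norm_star]
                exact mul_le_mul_of_nonneg_left (norm_sum_le _ _) (norm_nonneg _)
            _ ≤ ∑ j, ‖(M - 1) i j‖ * (l2 x * l2 y) := by
                rw [Finset.mul_sum]
                refine Finset.sum_le_sum fun j _ => ?_
                rw [norm_mul]
                nlinarith [mul_le_mul (norm_le_l2 x j) (norm_le_l2 y i)
                  (norm_nonneg (y i)) (l2_nonneg x), norm_nonneg ((M-1) i j),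
                  norm_nonneg (x j), norm_nonneg (y i)]
  calc ‖star y ⬝ᵥ (M - 1).mulVec x‖ ≤ ∑ i, ∑ j, ‖(M - 1) i j‖ * (l2 x * l2 y) := h1
    _ = (∑ i, ∑ j, ‖(M - 1) i j‖) * l2 x * l2 y := by
        rw [Finset.sum_mul, Finset.sum_mul]
        congr 1; ext i; rw [Finset.sum_mul, Finset.sum_mul]
        congr 1; ext j; ring

lemma theta_nonneg [DecidableEq ι] (s : ℕ) (M : Matrix ι ι 𝕜) : 0 ≤ theta s M :=
  le_csInf ⟨_, theta_set_mem s M⟩ fun _ hδ => hδ.1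

lemma theta_bound [DecidableEq ι] (s : ℕ) (M : Matrix ι ι 𝕜) (J : Finset ι) (hJ : J.card ≤ s)
    (x y : ι → 𝕜) (hx : ∀ i, x i ≠ 0 → i ∈ J) (hy : ∀ i, y i ≠ 0 → i ∈ J) :
    ‖star y ⬝ᵥ M.mulVec x - star y ⬝ᵥ x‖ ≤ theta s M * (l2 x * l2 y) := by
  set q := ‖star y ⬝ᵥ M.mulVec x - star y ⬝ᵥ x‖ with hq
  set a := l2 x * l2 y with ha
  have ha0 : 0 ≤ a := mul_nonneg (l2_nonneg x) (l2_nonneg y)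
  rcases eq_or_lt_of_le ha0 with h0 | h0
  · have := (theta_set_mem s M).2 J hJ x y hx hy
    rw [mul_assoc, ← ha, ← h0, mul_zero] at this
    rw [← h0, mul_zero]; exact this
  · have h2 : q / a ≤ theta s M := by
      refine le_csInf ⟨_, theta_set_mem s M⟩ fun δ hδ => ?_
      rw [div_le_iff₀ h0]
      have := hδ.2 J hJ x y hx hy
      rw [mul_assoc, ← ha] at this
      exact this
    exact (div_le_iff₀ h0).mp h2

lemma ric_set_mem (s : ℕ) (Ψ : Matrix ι κ 𝕜) :
    (1 + ∑ i, ∑ j, ‖Ψ i j‖ ^ 2) ∈ {δ : ℝ | 0 ≤ δ ∧ ∀ x : κ → 𝕜, Sparse s x →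
    (1 - δ) * l2 x ^ 2 ≤ l2 (Ψ.mulVec x) ^ 2 ∧
      l2 (Ψ.mulVec x) ^ 2 ≤ (1 + δ) * l2 x ^ 2} := by
  refine ⟨by positivity, fun x _ => ⟨?_, ?_⟩⟩
  · have h1 : (1 - (1 + ∑ i, ∑ j, ‖Ψ i j‖ ^ 2)) ≤ 0 := by
      have : (0:ℝ) ≤ ∑ i, ∑ j, ‖Ψ i j‖ ^ 2 := by positivity
      linarith
    have h2 : (0:ℝ) ≤ l2 (Ψ.mulVec x) ^ 2 := by positivity
    nlinarith [sq_nonneg (l2 x), l2_nonneg x]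
  · have key : l2 (Ψ.mulVec x) ^ 2 ≤ (∑ i, ∑ j, ‖Ψ i j‖ ^ 2) * l2 x ^ 2 := by
      rw [l2_sq, l2_sq, Finset.sum_mul]
      refine Finset.sum_le_sum fun i _ => ?_
      calc ‖Ψ.mulVec x i‖ ^ 2 ≤ (∑ j, ‖Ψ i j‖ * ‖x j‖) ^ 2 := by
            have h := norm_sum_le Finset.univ (fun j => Ψ i j * x j)
            have h2 : ∀ j, ‖Ψ i j * x j‖ = ‖Ψ i j‖ * ‖x j‖ := fun j => norm_mul _ _
            simp only [h2] at h
            have h0 : (0:ℝ) ≤ ‖Ψ.mulVec x i‖ := norm_nonneg _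
            exact pow_le_pow_left₀ h0 h 2
        _ ≤ (∑ j, ‖Ψ i j‖ ^ 2) * ∑ j, ‖x j‖ ^ 2 :=
            Finset.sum_mul_sq_le_sq_mul_sq _ _ _
    have h3 : (0:ℝ) ≤ l2 x ^ 2 := by positivity
    nlinarith

lemma ric_nonneg (s : ℕ) (Ψ : Matrix ι κ 𝕜) : 0 ≤ ric s Ψ :=
  le_csInf ⟨_, ric_set_mem s Ψ⟩ fun _ hδ => hδ.1

lemma ric_upper (s : ℕ) (Ψ : Matrix ι κ 𝕜) (x : κ → 𝕜) (hx : Sparse s x) :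
    l2 (Ψ.mulVec x) ^ 2 ≤ (1 + ric s Ψ) * l2 x ^ 2 := by
  have ha0 : (0:ℝ) ≤ l2 x ^ 2 := by positivity
  rcases eq_or_lt_of_le ha0 with h0 | h0
  · have hm := ((ric_set_mem s Ψ).2 x hx).2
    rw [← h0, mul_zero] at hm
    rw [← h0, mul_zero]
    linarith
  · have h2 : (l2 (Ψ.mulVec x) ^ 2 - l2 x ^ 2) / l2 x ^ 2 ≤ ric s Ψ := by
      refine le_csInf ⟨_, ric_set_mem s Ψ⟩ fun δ hδ => ?_
      rw [div_le_iff₀ h0]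
      have := (hδ.2 x hx).2
      nlinarith
    have h3 := (div_le_iff₀ h0).mp h2
    nlinarith

lemma ric_upper_l2 (s : ℕ) (Ψ : Matrix ι κ 𝕜) (x : κ → 𝕜) (hx : Sparse s x) :
    l2 (Ψ.mulVec x) ≤ Real.sqrt (1 + ric s Ψ) * l2 x := by
  have h := ric_upper s Ψ x hx
  have h1 : l2 (Ψ.mulVec x) = Real.sqrt (l2 (Ψ.mulVec x) ^ 2) :=
    (Real.sqrt_sq (l2_nonneg _)).symm
  rw [h1]
  calc Real.sqrt (l2 (Ψ.mulVec x) ^ 2) ≤ Real.sqrt ((1 + ric s Ψ) * l2 x ^ 2) :=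
        Real.sqrt_le_sqrt h
    _ = Real.sqrt (1 + ric s Ψ) * l2 x := by
        rw [Real.sqrt_mul (by linarith [ric_nonneg s Ψ]), Real.sqrt_sq (l2_nonneg x)]

omit [Fintype κ] in
lemma sum_le_sum_of_card_le {P Q : Finset ι} (g : ι → ℝ) (hg : ∀ i, 0 ≤ g i)
    (hc : P.card ≤ Q.card) (h : ∀ p ∈ P, ∀ q ∈ Q, g p ≤ g q) :
    ∑ i ∈ P, g i ≤ ∑ i ∈ Q, g i := by
  obtain ⟨t, htQ, htc⟩ := Finset.exists_subset_card_eq hc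
  have e : {x // x ∈ P} ≃ {x // x ∈ t} := Finset.equivOfCardEq htc.symm
  calc ∑ i ∈ P, g i = ∑ a : {x // x ∈ P}, g a := (Finset.sum_attach P g).symm
    _ ≤ ∑ a : {x // x ∈ P}, g (e a) := by
        refine Finset.sum_le_sum fun a _ => ?_
        exact h a a.2 (e a) (htQ (e a).2)
    _ = ∑ b : {x // x ∈ t}, g b := Equiv.sum_comp e fun b => g b
    _ = ∑ i ∈ t, g i := Finset.sum_attach t g
    _ ≤ ∑ i ∈ Q, g i := Finset.sum_le_sum_of_subset_of_nonneg htQ fun i _ _ => hg i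

lemma add_le_sqrt_two (r t : ℝ) (hr : 0 ≤ r) (ht : 0 ≤ t) :
    r + t ≤ Real.sqrt 2 * Real.sqrt (r ^ 2 + t ^ 2) := by
  rw [← Real.sqrt_mul (by norm_num)]
  rw [show r + t = Real.sqrt ((r+t)^2) from (Real.sqrt_sq (by linarith)).symm]
  exact Real.sqrt_le_sqrt (by nlinarith [sq_nonneg (r - t)])

lemma key_ineq (θ a b c : ℝ) (hθ0 : 0 ≤ θ) (hθ1 : θ < 1) (ha : 0 ≤ a) (hb : 0 ≤ b)
    (hc : 0 ≤ c) (h : a ^ 2 ≤ (θ * a + c) ^ 2 + b ^ 2) :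
    a ≤ b / Real.sqrt (1 - θ ^ 2) + c / (1 - θ) := by
  set p := Real.sqrt (1 - θ ^ 2) with hpdef
  have hq : (0:ℝ) < 1 - θ := by linarith
  have hp2 : p ^ 2 = 1 - θ ^ 2 := Real.sq_sqrt (by nlinarith)
  have hp0 : 0 < p := Real.sqrt_pos.mpr (by nlinarith)
  by_contra hcon
  push_neg at hcon
  rw [div_add_div _ _ (ne_of_gt hp0) (ne_of_gt hq), div_lt_iff₀ (by positivity)] at hcon
  have hD : 0 < a * p * (1 - θ) - b * (1 - θ) - p * c := by nlinarith
  have ha' : 0 < a := by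
    nlinarith [mul_pos hp0 hq, mul_nonneg hb hq.le, mul_nonneg hp0.le hc]
  have hfle : p ^ 2 * a ^ 2 - 2 * θ * a * c - c ^ 2 - b ^ 2 ≤ 0 := by
    nlinarith [hp2, sq_nonneg a]
  have key : p * (1 - θ) * (p ^ 2 * a ^ 2 - 2 * θ * a * c - c ^ 2 - b ^ 2)
      = (a * p * (1 - θ) - b * (1 - θ) - p * c) * (p ^ 2 * a + p * b + (1 - θ) * c)
        + 2 * (b * c * (1 - θ)) := by
    linear_combination (a * c * p + b * c) * hp2
  have hL : p * (1 - θ) * (p ^ 2 * a ^ 2 - 2 * θ * a * c - c ^ 2 - b ^ 2) ≤ 0 :=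
    mul_nonpos_of_nonneg_of_nonpos (by positivity) hfle
  have hvpos : 0 < p ^ 2 * a + p * b + (1 - θ) * c := by
    have h1 : 0 < p ^ 2 * a := by positivity
    have h2 : 0 ≤ p * b := by positivity
    have h3 : 0 ≤ (1 - θ) * c := by positivity
    linarith
  have h4 : 0 ≤ b * c * (1 - θ) := by positivity
  nlinarith [mul_pos hD hvpos]

end Helpers

set_option maxHeartbeats 1600000 in
/-- one iteration of Oblique Hard Thresholding Pursuit. -/
theorem statement9 (m n s : ℕ) (Ψ Ψt : Matrix (Fin m) (Fin n) 𝕜)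
    (xstar x xplus : Fin n → 𝕜) (hxstar : Sparse s xstar) (hx : Sparse s x)
    (z y : Fin m → 𝕜) (hy : y = Ψ.mulVec xstar + z)
    (θ : ℝ) (hθdef : θ = theta (3 * s) (Ψtᴴ * Ψ)) (hθ : θ < 1)
    (v : Fin n → 𝕜) (hv : v = x + Ψtᴴ.mulVec (y - Ψ.mulVec x))
    (J₁ : Finset (Fin n)) (hJ₁ : J₁.card = s)
    (hsel : ∀ j ∈ J₁, ∀ l, l ∉ J₁ → ‖v l‖ ≤ ‖v j‖)
    (hxpsupp : ∀ i, xplus i ≠ 0 → i ∈ J₁)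
    (hxporth : ∀ j ∈ J₁, star (col Ψt j) ⬝ᵥ (y - Ψ.mulVec xplus) = 0) :
    l2 (xplus - xstar) ≤
      Real.sqrt (2 * θ ^ 2 / (1 - θ ^ 2)) * l2 (x - xstar) +
        (Real.sqrt (2 / (1 - θ ^ 2)) + 1 / (1 - θ)) *
          Real.sqrt (1 + ric (2 * s) Ψt) * l2 z := by
  classical
  obtain ⟨S, hScard, hSsupp⟩ := hxstar
  obtain ⟨Sx, hSxcard, hSxsupp⟩ := hx
  have hθ0 : 0 ≤ θ := hθdef ▸ theta_nonneg _ _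
  have hθsq : (0:ℝ) < 1 - θ ^ 2 := by nlinarith
  set M : Matrix (Fin n) (Fin n) 𝕜 := Ψtᴴ * Ψ with hM
  clear_value M
  set d : Fin n → 𝕜 := x - xstar with hd
  clear_value d
  set u : Fin n → 𝕜 := xplus - xstar with hu
  clear_value u
  set rc : ℝ := Real.sqrt (1 + ric (2 * s) Ψt) with hrc
  have hrc0 : 0 ≤ rc := Real.sqrt_nonneg _
  set cz : ℝ := rc * l2 z with hcz
  clear_value cz
  have hcz0 : 0 ≤ cz := by rw [hcz]; exact mul_nonneg hrc0 (l2_nonneg z)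
  set Jbig : Finset (Fin n) := S ∪ Sx ∪ J₁ with hJbig
  have hJbigcard : Jbig.card ≤ 3 * s := by
    calc Jbig.card ≤ (S ∪ Sx).card + J₁.card := Finset.card_union_le _ _
      _ ≤ S.card + Sx.card + J₁.card := by
          have := Finset.card_union_le S Sx; omega
      _ ≤ 3 * s := by omega
  -- the theta bound specialized
  have thetaB : ∀ (x' y' : Fin n → 𝕜), (∀ i, x' i ≠ 0 → i ∈ Jbig) →
      (∀ i, y' i ≠ 0 → i ∈ Jbig) →
      ‖star y' ⬝ᵥ M.mulVec x' - star y' ⬝ᵥ x'‖ ≤ θ * (l2 x' * l2 y') := by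
    intro x' y' hx' hy'
    rw [hθdef]
    exact theta_bound (3 * s) M Jbig hJbigcard x' y' hx' hy'
  have hdsupp : ∀ i, d i ≠ 0 → i ∈ Jbig := by
    intro i hi
    rcases ne_or_eq (x i) 0 with h | h
    · exact Finset.mem_union_left _ (Finset.mem_union_right _ (hSxsupp i h))
    · have : xstar i ≠ 0 := by
        intro h2; apply hi; rw [hd]; show x i - xstar i = 0; rw [h, h2, sub_zero]
      exact Finset.mem_union_left _ (Finset.mem_union_left _ (hSsupp i this))
  have husupp : ∀ i, u i ≠ 0 → i ∈ J₁ ∪ S := by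
    intro i hi
    rcases ne_or_eq (xplus i) 0 with h | h
    · exact Finset.mem_union_left _ (hxpsupp i h)
    · have : xstar i ≠ 0 := by
        intro h2; apply hi; rw [hu]; show xplus i - xstar i = 0; rw [h, h2, sub_zero]
      exact Finset.mem_union_right _ (hSsupp i this)
  have husuppbig : ∀ i, u i ≠ 0 → i ∈ Jbig := by
    intro i hi
    rcases Finset.mem_union.mp (husupp i hi) with h | h
    · exact Finset.mem_union_right _ h
    · exact Finset.mem_union_left _ (Finset.mem_union_left _ h)
  -- generic Claim A2
  have claimA2 : ∀ T : Finset (Fin n), T.card ≤ 2 * s →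
      l2 (proj T (Ψtᴴ.mulVec z)) ≤ cz := by
    intro T hT
    set w : Fin n → 𝕜 := proj T (Ψtᴴ.mulVec z) with hwdef
    have hw : star w ⬝ᵥ (Ψtᴴ.mulVec z) = ((l2 w ^ 2 : ℝ) : 𝕜) := dot_proj_self T _
    have hadj : star (Ψt.mulVec w) ⬝ᵥ z = star w ⬝ᵥ (Ψtᴴ.mulVec z) := adjoint_dot Ψt w z
    have h1 : l2 w ^ 2 = ‖star (Ψt.mulVec w) ⬝ᵥ z‖ := by
      rw [hadj, hw, RCLike.norm_ofReal, abs_of_nonneg (by positivity)]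
    have h2 : ‖star (Ψt.mulVec w) ⬝ᵥ z‖ ≤ l2 (Ψt.mulVec w) * l2 z := norm_dot_le _ _
    have h3 : l2 (Ψt.mulVec w) ≤ rc * l2 w :=
      ric_upper_l2 (2 * s) Ψt w ⟨T, hT, proj_support' T _⟩
    rcases eq_or_lt_of_le (l2_nonneg w) with h0 | h0
    · rw [← h0]; exact hcz0
    · have h4 : l2 w ^ 2 ≤ rc * l2 w * l2 z := by
        rw [h1]
        calc ‖star (Ψt.mulVec w) ⬝ᵥ z‖ ≤ l2 (Ψt.mulVec w) * l2 z := h2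
          _ ≤ rc * l2 w * l2 z := mul_le_mul_of_nonneg_right h3 (l2_nonneg z)
      rw [hcz]
      nlinarith [l2_nonneg z]
  -- the identity v - xstar = Ψt* z - (M d - d)
  have hvx : v - xstar = Ψtᴴ.mulVec z - (M.mulVec d - d) := by
    rw [hv, hy, hd, hM, ← mulVec_mulVec]
    have h1 : Ψ.mulVec xstar + z - Ψ.mulVec x = z - Ψ.mulVec (x - xstar) := by
      rw [Matrix.mulVec_sub]; abel
    rw [h1, Matrix.mulVec_sub]
    abel
  -- Claim A1
  have claimA1 : ∀ T : Finset (Fin n), (∀ i ∈ T, i ∈ Jbig) →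
      l2 (proj T (M.mulVec d - d)) ≤ θ * l2 d := by
    intro T hT
    set g : Fin n → 𝕜 := M.mulVec d - d with hg
    set w : Fin n → 𝕜 := proj T g with hwdef
    have hw : star w ⬝ᵥ g = ((l2 w ^ 2 : ℝ) : 𝕜) := dot_proj_self T g
    have h1 : star w ⬝ᵥ M.mulVec d - star w ⬝ᵥ d = star w ⬝ᵥ g := by
      rw [hg, dotProduct_sub]
    have h2 : l2 w ^ 2 ≤ θ * (l2 d * l2 w) := by
      have h3 := thetaB d w hdsupp (fun i hi => hT i (proj_support' T g i hi))
      rw [h1, hw, RCLike.norm_ofReal, abs_of_nonneg (by positivity)] at h3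
      exact h3
    rcases eq_or_lt_of_le (l2_nonneg w) with h0 | h0
    · rw [← h0]; exact mul_nonneg hθ0 (l2_nonneg d)
    · nlinarith [l2_nonneg d]
  -- thresholding sets
  set P : Finset (Fin n) := S \ J₁ with hP
  set Q : Finset (Fin n) := J₁ \ S with hQ
  set U : Finset (Fin n) := P ∪ Q with hU
  have hPQdisj : Disjoint P Q := by
    rw [hP, hQ, Finset.disjoint_left]
    intro i hi1 hi2
    exact (Finset.mem_sdiff.mp hi1).2 (Finset.mem_sdiff.mp hi2).1
  have hPcard : P.card ≤ Q.card := by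
    rw [hP, hQ]
    have h1 := Finset.card_sdiff_add_card_inter S J₁
    have h2 := Finset.card_sdiff_add_card_inter J₁ S
    have h3 : (S ∩ J₁).card = (J₁ ∩ S).card := by rw [Finset.inter_comm]
    omega
  have hUcard : U.card ≤ 2 * s := by
    have h1 : P.card ≤ s := le_trans (Finset.card_le_card (Finset.sdiff_subset)) hScard
    have h2 : Q.card ≤ s := le_trans (Finset.card_le_card (Finset.sdiff_subset)) hJ₁.le
    calc U.card ≤ P.card + Q.card := Finset.card_union_le _ _
      _ ≤ 2 * s := by omega
  have hUsub : ∀ i ∈ U, i ∈ Jbig := by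
    intro i hi
    rcases Finset.mem_union.mp hi with h | h
    · exact Finset.mem_union_left _ (Finset.mem_union_left _ (Finset.mem_sdiff.mp h).1)
    · exact Finset.mem_union_right _ (Finset.mem_sdiff.mp h).1
  -- the b value
  set b : ℝ := l2 (proj J₁ᶜ xstar) with hb
  have hb0 : 0 ≤ b := l2_nonneg _
  -- step 1 : b = l2 (proj P xstar)
  have step1 : b = l2 (proj P xstar) := by
    apply l2_eq_of_sq_eq
    rw [l2_proj_sq, l2_proj_sq]
    refine (Finset.sum_subset ?_ ?_).symm
    · intro i hi
      exact Finset.mem_compl.mpr (Finset.mem_sdiff.mp hi).2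
    · intro i hi1 hi2
      have hiS : i ∉ S := fun hS => hi2 (Finset.mem_sdiff.mpr ⟨hS, Finset.mem_compl.mp hi1⟩)
      have : xstar i = 0 := by
        by_contra h; exact hiS (hSsupp i h)
      rw [this, norm_zero]; ring
  -- step 2 : triangle
  have step2 : l2 (proj P xstar) ≤ l2 (proj P (v - xstar)) + l2 (proj P v) := by
    have hdec : proj P xstar = proj P v - proj P (v - xstar) := by
      rw [← proj_sub']
      congr 1
      funext i; simp [Pi.sub_apply]
    rw [hdec]
    calc l2 (proj P v - proj P (v - xstar)) ≤ l2 (proj P v) + l2 (proj P (v - xstar)) :=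
          l2_sub_le _ _
      _ = l2 (proj P (v - xstar)) + l2 (proj P v) := by ring
  -- step 3
  have step3 : l2 (proj P v) ≤ l2 (proj Q v) := by
    apply l2_le_of_sq_le
    rw [l2_proj_sq, l2_proj_sq]
    refine sum_le_sum_of_card_le _ (fun i => by positivity) hPcard ?_
    intro p hp q hq
    have h1 : p ∉ J₁ := (Finset.mem_sdiff.mp hp).2
    have h2 : q ∈ J₁ := (Finset.mem_sdiff.mp hq).1
    exact pow_le_pow_left₀ (norm_nonneg _) (hsel q h2 p h1) 2
  -- step 4
  have step4 : l2 (proj Q v) = l2 (proj Q (v - xstar)) := by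
    congr 1
    funext i
    simp only [proj]
    split
    · rename_i hi
      have hiS : i ∉ S := (Finset.mem_sdiff.mp hi).2
      have : xstar i = 0 := by by_contra h; exact hiS (hSsupp i h)
      simp [Pi.sub_apply, this]
    · rfl
  -- step 5
  have step5 : l2 (proj P (v - xstar)) + l2 (proj Q (v - xstar)) ≤
      Real.sqrt 2 * l2 (proj U (v - xstar)) := by
    have h1 : l2 (proj U (v - xstar)) ^ 2 =
        l2 (proj P (v - xstar)) ^ 2 + l2 (proj Q (v - xstar)) ^ 2 := by
      rw [l2_proj_sq, l2_proj_sq, l2_proj_sq, hU, Finset.sum_union hPQdisj]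
    have h2 := add_le_sqrt_two (l2 (proj P (v - xstar))) (l2 (proj Q (v - xstar)))
      (l2_nonneg _) (l2_nonneg _)
    rw [← h1] at h2
    rw [Real.sqrt_sq (l2_nonneg _)] at h2
    exact h2
  -- step 6
  have step6 : l2 (proj U (v - xstar)) ≤ θ * l2 d + cz := by
    have hdec : proj U (v - xstar) = proj U (Ψtᴴ.mulVec z) - proj U (M.mulVec d - d) := by
      rw [← proj_sub', hvx]
    rw [hdec]
    calc l2 (proj U (Ψtᴴ.mulVec z) - proj U (M.mulVec d - d))
        ≤ l2 (proj U (Ψtᴴ.mulVec z)) + l2 (proj U (M.mulVec d - d)) := l2_sub_le _ _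
      _ ≤ cz + θ * l2 d := add_le_add (claimA2 U hUcard) (claimA1 U hUsub)
      _ = θ * l2 d + cz := by ring
  have hbbound : b ≤ Real.sqrt 2 * (θ * l2 d + cz) := by
    calc b ≤ l2 (proj P (v - xstar)) + l2 (proj P v) := step1 ▸ step2
      _ ≤ l2 (proj P (v - xstar)) + l2 (proj Q (v - xstar)) := by
          have := step3.trans_eq step4
          linarith
      _ ≤ Real.sqrt 2 * l2 (proj U (v - xstar)) := step5
      _ ≤ Real.sqrt 2 * (θ * l2 d + cz) := by
          apply mul_le_mul_of_nonneg_left step6 (Real.sqrt_nonneg 2)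
  -- Step B
  set a : ℝ := l2 u with ha
  have ha0 : 0 ≤ a := l2_nonneg _
  have hsplit : a ^ 2 = l2 (proj J₁ u) ^ 2 + b ^ 2 := by
    rw [ha, l2_split J₁ u]
    congr 1
    rw [l2_proj_sq, l2_proj_sq]
    refine Finset.sum_congr rfl fun i hi => ?_
    have h1 : xplus i = 0 := by
      by_contra h; exact (Finset.mem_compl.mp hi) (hxpsupp i h)
    have h2 : u i = -(xstar i) := by
      rw [hu]; show xplus i - xstar i = _
      rw [h1]; ring
    rw [h2, norm_neg]
  -- orthogonality
  have horthkey : star (proj J₁ u) ⬝ᵥ (Ψtᴴ.mulVec (z - Ψ.mulVec u)) = 0 := by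
    rw [dotProduct]
    refine Finset.sum_eq_zero fun j _ => ?_
    rcases Finset.decidableMem j J₁ with hj | hj
    · have : proj J₁ u j = 0 := by simp [proj, hj]
      rw [Pi.star_apply, this, star_zero, zero_mul]
    · have hz : Ψtᴴ.mulVec (z - Ψ.mulVec u) j = 0 := by
        have h1 : z - Ψ.mulVec u = y - Ψ.mulVec xplus := by
          rw [hy, hu, Matrix.mulVec_sub]; abel
        have h2 : Ψtᴴ.mulVec (z - Ψ.mulVec u) j = star (col Ψt j) ⬝ᵥ (z - Ψ.mulVec u) := by
          simp [Matrix.mulVec, dotProduct, conjTranspose_apply, col]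
        rw [h2, h1]
        exact hxporth j hj
      rw [hz, mul_zero]
  have hwbound : l2 (proj J₁ u) ≤ θ * a + cz := by
    set w : Fin n → 𝕜 := proj J₁ u with hwdef
    have hwsupp : ∀ i, w i ≠ 0 → i ∈ Jbig := fun i hi =>
      Finset.mem_union_right _ (proj_support' J₁ u i hi)
    have e1 : star w ⬝ᵥ u = ((l2 w ^ 2 : ℝ) : 𝕜) := dot_proj_self J₁ u
    have e3 : ‖star w ⬝ᵥ u - star w ⬝ᵥ M.mulVec u‖ ≤ θ * (a * l2 w) := by
      rw [norm_sub_rev]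
      exact thetaB u w husuppbig hwsupp
    have e4 : star w ⬝ᵥ M.mulVec u = star (Ψt.mulVec w) ⬝ᵥ z := by
      have h1 : M.mulVec u = Ψtᴴ.mulVec (Ψ.mulVec u) := by
        rw [hM, ← mulVec_mulVec]
      have h2 : star w ⬝ᵥ (Ψtᴴ.mulVec (Ψ.mulVec u)) = star w ⬝ᵥ (Ψtᴴ.mulVec z) := by
        have h3 : star w ⬝ᵥ (Ψtᴴ.mulVec z) - star w ⬝ᵥ (Ψtᴴ.mulVec (Ψ.mulVec u)) = 0 := by
          rw [← dotProduct_sub, ← Matrix.mulVec_sub]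
          exact horthkey
        linear_combination -h3
      rw [h1, h2, ← adjoint_dot]
    have e5 : ‖star (Ψt.mulVec w) ⬝ᵥ z‖ ≤ cz * l2 w := by
      have h1 : l2 (Ψt.mulVec w) ≤ rc * l2 w := by
        refine ric_upper_l2 (2 * s) Ψt w ⟨J₁, by omega, proj_support' J₁ u⟩
      calc ‖star (Ψt.mulVec w) ⬝ᵥ z‖ ≤ l2 (Ψt.mulVec w) * l2 z := norm_dot_le _ _
        _ ≤ rc * l2 w * l2 z := mul_le_mul_of_nonneg_right h1 (l2_nonneg z)
        _ = cz * l2 w := by rw [hcz]; ring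
    have e6 : l2 w ^ 2 ≤ θ * (a * l2 w) + cz * l2 w := by
      have h1 : (((l2 w ^ 2 : ℝ)) : 𝕜) =
          (star w ⬝ᵥ u - star w ⬝ᵥ M.mulVec u) + star w ⬝ᵥ M.mulVec u := by
        rw [← e1]; ring
      have h2 : l2 w ^ 2 = ‖(star w ⬝ᵥ u - star w ⬝ᵥ M.mulVec u) + star w ⬝ᵥ M.mulVec u‖ := by
        rw [← h1, RCLike.norm_ofReal, abs_of_nonneg (by positivity)]
      rw [h2]
      calc ‖(star w ⬝ᵥ u - star w ⬝ᵥ M.mulVec u) + star w ⬝ᵥ M.mulVec u‖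
          ≤ ‖star w ⬝ᵥ u - star w ⬝ᵥ M.mulVec u‖ + ‖star w ⬝ᵥ M.mulVec u‖ := norm_add_le _ _
        _ ≤ θ * (a * l2 w) + cz * l2 w := by
            have e5' : ‖star w ⬝ᵥ M.mulVec u‖ ≤ cz * l2 w := by rw [e4]; exact e5
            exact add_le_add e3 e5'
    rcases eq_or_lt_of_le (l2_nonneg w) with h0 | h0
    · rw [← h0]; positivity
    · nlinarith
  -- final quadratic bound
  have hfinal : a ^ 2 ≤ (θ * a + cz) ^ 2 + b ^ 2 := by
    rw [hsplit]
    have h1 : l2 (proj J₁ u) ^ 2 ≤ (θ * a + cz) ^ 2 := by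
      have h2 : 0 ≤ θ * a + cz := by positivity
      nlinarith [l2_nonneg (proj J₁ u), hwbound]
    linarith
  have hkey : a ≤ b / Real.sqrt (1 - θ ^ 2) + cz / (1 - θ) :=
    key_ineq θ a b cz hθ0 hθ ha0 hb0 hcz0 hfinal
  set p : ℝ := Real.sqrt (1 - θ ^ 2) with hpdef
  have hp0 : 0 < p := Real.sqrt_pos.mpr hθsq
  have h1θ : (0:ℝ) < 1 - θ := by linarith
  have hbp : b / p ≤ Real.sqrt 2 * (θ * l2 d + cz) / p := by gcongr
  have hchain : a ≤ Real.sqrt 2 * (θ * l2 d + cz) / p + cz / (1 - θ) := by linarith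
  have hs1 : Real.sqrt (2 * θ ^ 2 / (1 - θ ^ 2)) = Real.sqrt 2 * θ / p := by
    rw [hpdef, Real.sqrt_div (by positivity), Real.sqrt_mul (by norm_num),
      Real.sqrt_sq hθ0]
  have hs2 : Real.sqrt (2 / (1 - θ ^ 2)) = Real.sqrt 2 / p := by
    rw [hpdef, Real.sqrt_div (by norm_num)]
  have hre : Real.sqrt 2 * (θ * l2 d + cz) / p + cz / (1 - θ)
      = Real.sqrt 2 * θ / p * l2 d + (Real.sqrt 2 / p + 1 / (1 - θ)) * rc * l2 z := by
    rw [hcz]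
    field_simp
    ring
  have hgoal : a ≤ Real.sqrt (2 * θ ^ 2 / (1 - θ ^ 2)) * l2 d +
      (Real.sqrt (2 / (1 - θ ^ 2)) + 1 / (1 - θ)) * rc * l2 z := by
    rw [hs1, hs2]
    calc a ≤ Real.sqrt 2 * (θ * l2 d + cz) / p + cz / (1 - θ) := hchain
      _ = Real.sqrt 2 * θ / p * l2 d + (Real.sqrt 2 / p + 1 / (1 - θ)) * rc * l2 z := hre
  exact hgoal
end ObliquePursuit
end
end

section
/- (Singular values of a Schur complement; second assertion of the paper's Lemma A.1.) Let M ∈ K^{n×n} be nonsingular and partition M = [[M₁₁, M₁₂],[M₂₁, M₂₂]] where M₂₂ ∈ K^{q×q} with 0 < q < n is invertible. Let M/M₂₂ = M₁₁ − M₁₂M₂₂⁻¹M₂₁ ∈ K^{(n−q)×(n−q)} denote the Schur complement of the block M₂₂. Then for every j = 1,…,n−q one has σ_j(M/M₂₂) ≥ σ_{j+q}(M), where σ_k(A) denotes the k-th largest singular value of A. -/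
open scoped BigOperators
open Matrix MeasureTheory

noncomputable section

namespace ObliquePursuit

variable {𝕜 : Type*} [RCLike 𝕜]

lemma rank_add_le' {m n : Type*} [Fintype m] [Fintype n] (A B : Matrix m n 𝕜) :
    (A + B).rank ≤ A.rank + B.rank := by
  rw [Matrix.rank, Matrix.rank, Matrix.rank, Matrix.mulVecLin_add]
  have h : LinearMap.range (A.mulVecLin + B.mulVecLin) ≤
      LinearMap.range A.mulVecLin ⊔ LinearMap.range B.mulVecLin := by
    rintro x ⟨y, rfl⟩
    exact Submodule.mem_sup.2 ⟨_, ⟨y, rfl⟩, _, ⟨y, rfl⟩, rfl⟩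
  exact (Submodule.finrank_mono h).trans
    (Submodule.finrank_add_le_finrank_add_finrank _ _)

lemma specNorm_fromBlocks_le {p q : ℕ} (C : Matrix (Fin p) (Fin p) 𝕜) :
    specNorm (Matrix.fromBlocks C 0 0 (0 : Matrix (Fin q) (Fin q) 𝕜)) ≤ specNorm C := by
  rw [specNorm, specNorm]
  refine ContinuousLinearMap.opNorm_le_bound _ (norm_nonneg _) fun x => ?_
  set A : Matrix (Fin p ⊕ Fin q) (Fin p ⊕ Fin q) 𝕜 :=
    Matrix.fromBlocks C 0 0 (0 : Matrix (Fin q) (Fin q) 𝕜) with hA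
  set x₁ : EuclideanSpace 𝕜 (Fin p) := (WithLp.equiv 2 _).symm (fun i => x (Sum.inl i)) with hx₁
  have hentry : ∀ k, (Matrix.toEuclideanLin A x) k =
      Sum.elim ((Matrix.toEuclideanLin C x₁) : Fin p → 𝕜) (fun _ => (0:𝕜)) k := by
    intro k
    cases k with
    | inl i =>
      simp [hA, Matrix.toEuclideanLin_apply, Matrix.mulVec, dotProduct,
        Fintype.sum_sum_type, Matrix.fromBlocks, hx₁]
    | inr i =>
      simp [hA, Matrix.toEuclideanLin_apply, Matrix.mulVec, dotProduct,
        Fintype.sum_sum_type, Matrix.fromBlocks]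
  have hnorm : ‖Matrix.toEuclideanLin A x‖ = ‖Matrix.toEuclideanLin C x₁‖ := by
    rw [EuclideanSpace.norm_eq, EuclideanSpace.norm_eq]
    congr 1
    rw [Fintype.sum_sum_type]
    simp [hentry]
  have hx1 : ‖x₁‖ ≤ ‖x‖ := by
    rw [EuclideanSpace.norm_eq, EuclideanSpace.norm_eq]
    apply Real.sqrt_le_sqrt
    rw [Fintype.sum_sum_type]
    have h : (∑ i : Fin p, ‖x₁ i‖ ^ 2) = ∑ a₁ : Fin p, ‖x (Sum.inl a₁)‖ ^ 2 := rfl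
    rw [h]
    exact le_add_of_nonneg_right (Finset.sum_nonneg fun _ _ => by positivity)
  calc ‖(LinearMap.toContinuousLinearMap (Matrix.toEuclideanLin A)) x‖
      = ‖Matrix.toEuclideanLin C x₁‖ := hnorm
    _ ≤ ‖LinearMap.toContinuousLinearMap (Matrix.toEuclideanLin C)‖ * ‖x₁‖ :=
        (LinearMap.toContinuousLinearMap (Matrix.toEuclideanLin C)).le_opNorm x₁
    _ ≤ _ := by
        apply mul_le_mul_of_nonneg_left hx1 (norm_nonneg _)

/-- singular values of a Schur complement interlace those of the full
matrix: `σ_j(M/M₂₂) ≥ σ_{j+q}(M)`. -/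
theorem statement17 (p q : ℕ) (hp : 0 < p) (hq : 0 < q)
    (M : Matrix (Fin p ⊕ Fin q) (Fin p ⊕ Fin q) 𝕜)
    (hM : IsUnit M.det) (hM22 : IsUnit M.toBlocks₂₂.det) :
    ∀ j : ℕ, 1 ≤ j → j ≤ p →
      singVal M (j + q) ≤
        singVal (M.toBlocks₁₁ - M.toBlocks₁₂ * M.toBlocks₂₂⁻¹ * M.toBlocks₂₁) j := by
  intro j hj hjp
  set S := M.toBlocks₁₁ - M.toBlocks₁₂ * M.toBlocks₂₂⁻¹ * M.toBlocks₂₁ with hS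
  simp only [singVal]
  refine le_csInf ⟨specNorm (S - 0), 0, by simp only [Matrix.rank_zero]; omega, rfl⟩ ?_
  rintro r ⟨B, hB, rfl⟩
  set B' : Matrix (Fin p ⊕ Fin q) (Fin p ⊕ Fin q) 𝕜 :=
    Matrix.fromBlocks (B + M.toBlocks₁₂ * M.toBlocks₂₂⁻¹ * M.toBlocks₂₁)
      M.toBlocks₁₂ M.toBlocks₂₁ M.toBlocks₂₂ with hB'def
  have hMB : M - B' = Matrix.fromBlocks (S - B) 0 0 0 := by
    ext (i | i) (k | k) <;>
      simp [hB'def, hS, Matrix.sub_apply, Matrix.toBlocks₁₁, Matrix.toBlocks₁₂,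
        Matrix.toBlocks₂₁, Matrix.toBlocks₂₂, Matrix.fromBlocks] <;> ring
  have hfac : B' = Matrix.fromBlocks B 0 0 0 +
      Matrix.fromRows (M.toBlocks₁₂ * M.toBlocks₂₂⁻¹) (1 : Matrix (Fin q) (Fin q) 𝕜) *
        Matrix.fromCols M.toBlocks₂₁ M.toBlocks₂₂ := by
    rw [Matrix.fromRows_mul_fromCols, Matrix.fromBlocks_add]
    rw [Matrix.nonsing_inv_mul_cancel_right _ _ hM22]
    simp [hB'def]
  have h1 : (Matrix.fromBlocks B 0 0 (0 : Matrix (Fin q) (Fin q) 𝕜)).rank ≤ B.rank := by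
    have hfac2 : Matrix.fromBlocks B 0 0 (0 : Matrix (Fin q) (Fin q) 𝕜) =
        Matrix.fromRows (1 : Matrix (Fin p) (Fin p) 𝕜) 0 *
          (B * Matrix.fromCols (1 : Matrix (Fin p) (Fin p) 𝕜) 0) := by
      rw [Matrix.mul_fromCols, Matrix.fromRows_mul_fromCols]
      simp
    rw [hfac2]
    exact (Matrix.rank_mul_le_right _ _).trans (Matrix.rank_mul_le_left _ _)
  have h2 : (Matrix.fromRows (M.toBlocks₁₂ * M.toBlocks₂₂⁻¹) (1 : Matrix (Fin q) (Fin q) 𝕜) *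
      Matrix.fromCols M.toBlocks₂₁ M.toBlocks₂₂).rank ≤ q :=
    (Matrix.rank_mul_le_left _ _).trans ((Matrix.rank_le_card_width _).trans (by simp))
  have hrank : B'.rank < j + q := by
    have := (hfac ▸ rank_add_le' (Matrix.fromBlocks B 0 0 0) _)
    omega
  have bdd : BddBelow {r : ℝ | ∃ B'' : Matrix (Fin p ⊕ Fin q) (Fin p ⊕ Fin q) 𝕜,
      B''.rank < j + q ∧ r = specNorm (M - B'')} := by
    refine ⟨0, ?_⟩
    rintro r ⟨B'', -, rfl⟩
    exact norm_nonneg _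
  refine (csInf_le bdd ⟨B', hrank, rfl⟩).trans ?_
  rw [hMB]
  exact specNorm_fromBlocks_le _
end ObliquePursuit
end
end
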